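/- arXiv:1001.2245 — 3 statements merged into one kernel-verified Lean document; each statement's English description precedes it below -/
import Mathlib

section
/- Let g : [t₀,∞) → ℝ be C¹ with g ≥ 1, and n : [t₀,∞) → ℝ continuous with 0 ≤ n(t) ≤ α₁(α₂ + g(t)) for constants α₁ > 0, α₂ ∈ ℝ with α₂ + g ≥ 0. Define, for λ, ω > 0, s(t) := (n(t)g(t)/λ) E(t) + (ω/2)∫_{t₀}^t n(τ) E(τ) dτ with E(t) := e^{−(ωλ/2)∫_{t₀}^t dτ/g(τ)}. Then s(t) ≤ (α₁/λ)(α₂ + g(t₀)) g(t₀) + (α₁/λ)∫_{t₀}^t E(τ) g'(τ)(α₂ + 2g(τ)) dτ. -/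
/-- Upper bound for s(t) via integration by parts. -/
theorem s_upper_bound (t₀ lam ω α₁ α₂ : ℝ) (g n E : ℝ → ℝ)
    (hlam : 0 < lam) (hω : 0 < ω) (hα₁ : 0 < α₁)
    (hg : ContDiff ℝ 1 g) (hg1 : ∀ t : ℝ, t₀ ≤ t → 1 ≤ g t)
    (hα₂g : ∀ t : ℝ, t₀ ≤ t → 0 ≤ α₂ + g t)
    (hn : Continuous n) (hn0 : ∀ t : ℝ, t₀ ≤ t → 0 ≤ n t)
    (hnbound : ∀ t : ℝ, t₀ ≤ t → n t ≤ α₁ * (α₂ + g t))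
    (hE : ∀ t : ℝ, E t = Real.exp (-(ω * lam / 2) * ∫ τ in t₀..t, 1 / g τ)) :
    ∀ t : ℝ, t₀ ≤ t →
      n t * g t / lam * E t + (ω / 2) * (∫ τ in t₀..t, n τ * E τ) ≤
      α₁ / lam * (α₂ + g t₀) * g t₀ +
      α₁ / lam * ∫ τ in t₀..t, E τ * deriv g τ * (α₂ + 2 * g τ) := by
  intro t ht
  set c : ℝ := ω * lam / 2 with hc
  have hgc : Continuous g := hg.continuous
  have hg'c : Continuous (deriv g) := hg.continuous_deriv le_rfl
  have hgpos : ∀ x ∈ Set.Icc t₀ t, (0:ℝ) < g x :=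
    fun x hx => lt_of_lt_of_le one_pos (hg1 x hx.1)
  have hEfun : E = fun s => Real.exp (-c * ∫ τ in t₀..s, 1 / g τ) := funext hE
  -- interval integrability of 1/g
  have hinvcont : ∀ x ∈ Set.Icc t₀ t, ContinuousAt (fun τ => 1 / g τ) x := by
    intro x hx
    exact ContinuousAt.div continuousAt_const hgc.continuousAt (ne_of_gt (hgpos x hx))
  have hIint : ∀ x ∈ Set.Icc t₀ t,
      IntervalIntegrable (fun τ => 1 / g τ) MeasureTheory.volume t₀ x := by
    intro x hx
    apply ContinuousOn.intervalIntegrable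
    intro τ hτ
    rw [Set.uIcc_of_le hx.1] at hτ
    exact (hinvcont τ ⟨hτ.1, le_trans hτ.2 hx.2⟩).continuousWithinAt
  have hmeasinv : StronglyMeasurableAtFilter (fun τ => 1 / g τ) (nhds t₀) := by
    exact (measurable_const.div hgc.measurable).stronglyMeasurable.stronglyMeasurableAtFilter
  -- derivative of E at points of Icc
  have hEderiv : ∀ x ∈ Set.Icc t₀ t,
      HasDerivAt E (E x * (-c * (1 / g x))) x := by
    intro x hx
    have hI : HasDerivAt (fun s => ∫ τ in t₀..s, 1 / g τ) (1 / g x) x :=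
      intervalIntegral.integral_hasDerivAt_right (hIint x hx)
        (measurable_const.div hgc.measurable).stronglyMeasurable.stronglyMeasurableAtFilter
        (hinvcont x hx)
    have h2 : HasDerivAt (fun s => -c * ∫ τ in t₀..s, 1 / g τ) (-c * (1 / g x)) x :=
      hI.const_mul (-c)
    have h3 := h2.exp
    rw [hEfun]
    simpa using h3
  -- F and its derivative
  set F : ℝ → ℝ := fun s => (α₂ + g s) * g s * E s with hF
  set φ : ℝ → ℝ := fun x => E x * deriv g x * (α₂ + 2 * g x) - c * ((α₂ + g x) * E x) with hφ
  have hFderiv : ∀ x ∈ Set.Icc t₀ t, HasDerivAt F (φ x) x := by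
    intro x hx
    have hgd : HasDerivAt g (deriv g x) x := (hg.differentiable one_ne_zero x).hasDerivAt
    have h1 : HasDerivAt (fun s => (α₂ + g s) * g s) ((0 + deriv g x) * g x + (α₂ + g x) * deriv g x) x :=
      ((hasDerivAt_const x α₂).add hgd).mul hgd
    have h2 := h1.mul (hEderiv x hx)
    convert h2 using 1
    have hgne : g x ≠ 0 := ne_of_gt (hgpos x hx)
    show E x * deriv g x * (α₂ + 2 * g x) - c * ((α₂ + g x) * E x) = _
    rw [one_div]
    have hgi : g x * (g x)⁻¹ = 1 := mul_inv_cancel₀ (ne_of_gt (hgpos x hx))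
    linear_combination (c * (α₂ + g x) * E x) * hgi
    all_goals rfl
  -- continuity of E on Icc
  have hEcont : ContinuousOn E (Set.Icc t₀ t) :=
    fun x hx => ((hEderiv x hx).continuousAt).continuousWithinAt
  have hEpos : ∀ x : ℝ, 0 < E x := by
    intro x; rw [hE x]; exact Real.exp_pos _
  -- integrability pieces
  have hcontOn : ∀ (f : ℝ → ℝ), ContinuousOn f (Set.Icc t₀ t) →
      IntervalIntegrable f MeasureTheory.volume t₀ t := by
    intro f hf
    apply ContinuousOn.intervalIntegrable
    rwa [Set.uIcc_of_le ht]
  have hint1 : IntervalIntegrable (fun x => E x * deriv g x * (α₂ + 2 * g x))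
      MeasureTheory.volume t₀ t :=
    hcontOn _ (((hEcont.mul hg'c.continuousOn).mul
      (continuousOn_const.add (continuousOn_const.mul hgc.continuousOn))))
  have hint2 : IntervalIntegrable (fun x => (α₂ + g x) * E x) MeasureTheory.volume t₀ t :=
    hcontOn _ ((continuousOn_const.add hgc.continuousOn).mul hEcont)
  have hintφ : IntervalIntegrable φ MeasureTheory.volume t₀ t := by
    have := hint1.sub (hint2.const_mul c)
    simpa [hφ] using this
  have hintnE : IntervalIntegrable (fun τ => n τ * E τ) MeasureTheory.volume t₀ t :=
    hcontOn _ (hn.continuousOn.mul hEcont)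
  -- FTC
  have key : F t - F t₀ = ∫ x in t₀..t, φ x := by
    symm
    apply intervalIntegral.integral_eq_sub_of_hasDerivAt
    · intro x hx
      rw [Set.uIcc_of_le ht] at hx
      exact hFderiv x hx
    · exact hintφ
  have hsplit : (∫ x in t₀..t, φ x) =
      (∫ x in t₀..t, E x * deriv g x * (α₂ + 2 * g x)) - c * ∫ x in t₀..t, (α₂ + g x) * E x := by
    rw [← intervalIntegral.integral_const_mul, ← intervalIntegral.integral_sub hint1 (hint2.const_mul c)]
  -- E t₀ = 1
  have hE0 : E t₀ = 1 := by
    rw [hE t₀, intervalIntegral.integral_same, mul_zero, Real.exp_zero]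
  -- main inequalities
  set A : ℝ := ∫ x in t₀..t, E x * deriv g x * (α₂ + 2 * g x) with hA
  set Bi : ℝ := ∫ x in t₀..t, (α₂ + g x) * E x with hB
  set Ni : ℝ := ∫ x in t₀..t, n x * E x with hN
  have hFt : F t = F t₀ + A - c * Bi := by
    rw [hsplit] at key; linarith
  have h1 : n t * g t / lam * E t ≤ α₁ / lam * F t := by
    have hgt : 0 < g t := hgpos t ⟨ht, le_refl t⟩
    have hEt : 0 < E t := hEpos t
    have hb := hnbound t ht
    have : n t * (g t * E t / lam) ≤ (α₁ * (α₂ + g t)) * (g t * E t / lam) := by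
      apply mul_le_mul_of_nonneg_right hb
      positivity
    calc n t * g t / lam * E t = n t * (g t * E t / lam) := by ring
      _ ≤ (α₁ * (α₂ + g t)) * (g t * E t / lam) := this
      _ = α₁ / lam * F t := by simp only [hF]; field_simp
  have h2 : Ni ≤ α₁ * Bi := by
    rw [hN, hB, ← intervalIntegral.integral_const_mul]
    apply intervalIntegral.integral_mono_on ht hintnE (hint2.const_mul α₁)
    intro x hx
    have : n x ≤ α₁ * (α₂ + g x) := hnbound x hx.1
    have hEx : 0 ≤ E x := (hEpos x).le
    calc n x * E x ≤ (α₁ * (α₂ + g x)) * E x := mul_le_mul_of_nonneg_right this hEx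
      _ = α₁ * ((α₂ + g x) * E x) := by ring
  have hF0 : F t₀ = (α₂ + g t₀) * g t₀ := by
    simp [hF, hE0]
  have hcancel : α₁ / lam * c = ω / 2 * α₁ := by
    rw [hc]; field_simp
  have h3 : ω / 2 * Ni ≤ ω / 2 * (α₁ * Bi) := by
    apply mul_le_mul_of_nonneg_left h2; positivity
  have h4 : α₁ / lam * F t = α₁ / lam * ((α₂ + g t₀) * g t₀) + α₁ / lam * A - ω / 2 * (α₁ * Bi) := by
    rw [hFt, hF0]
    have : α₁ / lam * (c * Bi) = ω / 2 * (α₁ * Bi) := by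
      rw [← mul_assoc, hcancel]; ring
    linarith [this]
  have h5 : α₁ / lam * (α₂ + g t₀) * g t₀ = α₁ / lam * ((α₂ + g t₀) * g t₀) := by ring
  linarith
end

section
/- Let g : [t₀,∞) → ℝ be continuous with 1 ≤ g(t) ≤ Ḡ := sup g < ∞, n continuous with 0 ≤ n(t) ≤ α₁(α₂ + g(t)) where α₁ > 0 and α₂ + 1 ≥ 0, and λ, ω > 0. Define s(t) := (n(t)g(t)/λ) e^{−(ωλ/2)∫_{t₀}^t dτ/g(τ)} + (ω/2)∫_{t₀}^t n(τ) e^{−(ωλ/2)∫_{t₀}^τ dτ'/g(τ')} dτ. Then sup_{t ≥ t₀} s(t) ≤ (α₁/λ)(α₂ + Ḡ) Ḡ. -/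
/-- If g is bounded above by its finite supremum Ḡ, then s is uniformly bounded by
(α₁/λ)(α₂+Ḡ)Ḡ. -/
theorem s_uniform_bound (t₀ lam ω α₁ α₂ Gbar : ℝ) (g n : ℝ → ℝ)
    (hlam : 0 < lam) (hω : 0 < ω) (hα₁ : 0 < α₁) (hα₂ : 0 ≤ α₂ + 1)
    (hg : Continuous g) (hg1 : ∀ t : ℝ, t₀ ≤ t → 1 ≤ g t)
    (hGbar : IsLUB (g '' Set.Ici t₀) Gbar)
    (hn : Continuous n) (hn0 : ∀ t : ℝ, t₀ ≤ t → 0 ≤ n t)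
    (hnbound : ∀ t : ℝ, t₀ ≤ t → n t ≤ α₁ * (α₂ + g t)) :
    ∀ t : ℝ, t₀ ≤ t →
      n t * g t / lam * Real.exp (-(ω * lam / 2) * ∫ τ in t₀..t, 1 / g τ) +
      (ω / 2) * (∫ τ in t₀..t,
        n τ * Real.exp (-(ω * lam / 2) * ∫ τ' in t₀..τ, 1 / g τ')) ≤
      α₁ / lam * (α₂ + Gbar) * Gbar := by
  intro t ht
  set c : ℝ := ω * lam / 2 with hc_def
  have hc : 0 < c := by positivity
  have hGg : ∀ τ : ℝ, t₀ ≤ τ → g τ ≤ Gbar := fun τ hτ => hGbar.1 ⟨τ, hτ, rfl⟩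
  have hG1 : 1 ≤ Gbar := le_trans (hg1 t₀ le_rfl) (hGg t₀ le_rfl)
  have hGpos : 0 < Gbar := lt_of_lt_of_le one_pos hG1
  have haG : 0 ≤ α₂ + Gbar := by linarith
  set F : ℝ → ℝ := fun u => ∫ τ in t₀..u, 1 / g τ with hF_def
  set E : ℝ → ℝ := fun u => Real.exp (-c * F u) with hE_def
  have hgpos : ∀ τ : ℝ, t₀ ≤ τ → 0 < g τ := fun τ hτ => lt_of_lt_of_le one_pos (hg1 τ hτ)
  have hinvint : ∀ τ : ℝ, t₀ ≤ τ →
      IntervalIntegrable (fun x => 1 / g x) MeasureTheory.volume t₀ τ := by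
    intro τ hτ
    apply ContinuousOn.intervalIntegrable
    rw [Set.uIcc_of_le hτ]
    exact ContinuousOn.div continuousOn_const hg.continuousOn
      (fun x hx => ne_of_gt (hgpos x hx.1))
  have hF : ∀ τ ∈ Set.Icc t₀ t, HasDerivAt F (1 / g τ) τ := by
    intro τ hτ
    exact intervalIntegral.integral_hasDerivAt_right (hinvint τ hτ.1)
      ((measurable_const.div hg.measurable).stronglyMeasurable.stronglyMeasurableAtFilter)
      (ContinuousAt.div continuousAt_const hg.continuousAt (ne_of_gt (hgpos τ hτ.1)))
  have hE : ∀ τ ∈ Set.Icc t₀ t, HasDerivAt E (E τ * (-c * (1 / g τ))) τ := by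
    intro τ hτ
    exact ((hF τ hτ).const_mul (-c)).exp
  have hnegE : ∀ τ ∈ Set.Icc t₀ t, HasDerivAt (fun u => -E u) (c / g τ * E τ) τ := by
    intro τ hτ
    have h := (hE τ hτ).neg
    refine h.congr_deriv ?_
    have hg0 : g τ ≠ 0 := ne_of_gt (hgpos τ hτ.1)
    ring
  have hEcont : ContinuousOn E (Set.Icc t₀ t) := fun τ hτ =>
    ((hE τ hτ).continuousAt).continuousWithinAt
  have hEpos : ∀ τ : ℝ, 0 < E τ := fun τ => Real.exp_pos _
  have hIntE : IntervalIntegrable E MeasureTheory.volume t₀ t := by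
    apply ContinuousOn.intervalIntegrable; rwa [Set.uIcc_of_le ht]
  have hIntcg : IntervalIntegrable (fun τ => c / g τ * E τ) MeasureTheory.volume t₀ t := by
    apply ContinuousOn.intervalIntegrable
    rw [Set.uIcc_of_le ht]
    exact (ContinuousOn.div continuousOn_const hg.continuousOn
      (fun x hx => ne_of_gt (hgpos x hx.1))).mul hEcont
  have hIntnE : IntervalIntegrable (fun τ => n τ * E τ) MeasureTheory.volume t₀ t := by
    apply ContinuousOn.intervalIntegrable
    rw [Set.uIcc_of_le ht]
    exact hn.continuousOn.mul hEcont
  have hFt₀ : F t₀ = 0 := intervalIntegral.integral_same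
  have hEt₀ : E t₀ = 1 := by simp [hE_def, hFt₀]
  have key : (∫ τ in t₀..t, c / g τ * E τ) = 1 - E t := by
    have h := intervalIntegral.integral_eq_sub_of_hasDerivAt
      (f := fun u => -E u) (f' := fun τ => c / g τ * E τ)
      (by rw [Set.uIcc_of_le ht]; exact hnegE) hIntcg
    rw [hEt₀] at h
    linarith
  have hFt : 0 ≤ F t := by
    apply intervalIntegral.integral_nonneg ht
    intro u hu
    have := hgpos u hu.1
    positivity
  have hEt1 : E t ≤ 1 := by
    rw [hE_def]
    apply Real.exp_le_one_iff.mpr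
    nlinarith
  have boundA : (∫ τ in t₀..t, E τ) ≤ Gbar / c * (1 - E t) := by
    have hmono : (∫ τ in t₀..t, E τ) ≤ ∫ τ in t₀..t, Gbar / c * (c / g τ * E τ) := by
      apply intervalIntegral.integral_mono_on ht hIntE (hIntcg.const_mul _)
      intro τ hτ
      have hg0 : 0 < g τ := hgpos τ hτ.1
      have h1 : Gbar / c * (c / g τ * E τ) = Gbar / g τ * E τ := by
        field_simp
      rw [h1]
      have h2 : (1 : ℝ) ≤ Gbar / g τ := (one_le_div hg0).mpr (hGg τ hτ.1)
      nlinarith [hEpos τ]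
    rwa [intervalIntegral.integral_const_mul, key] at hmono
  have boundB : (∫ τ in t₀..t, n τ * E τ) ≤ α₁ * (α₂ + Gbar) * ∫ τ in t₀..t, E τ := by
    rw [← intervalIntegral.integral_const_mul]
    apply intervalIntegral.integral_mono_on ht hIntnE (hIntE.const_mul _)
    intro τ hτ
    have h1 : n τ ≤ α₁ * (α₂ + Gbar) :=
      le_trans (hnbound τ hτ.1) (by nlinarith [hGg τ hτ.1])
    exact mul_le_mul_of_nonneg_right h1 (hEpos τ).le
  have boundB' : (∫ τ in t₀..t, n τ * E τ) ≤ α₁ * (α₂ + Gbar) * (Gbar / c * (1 - E t)) :=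
    le_trans boundB (mul_le_mul_of_nonneg_left boundA (by positivity))
  have term1 : n t * g t / lam * E t ≤ α₁ * (α₂ + Gbar) * Gbar / lam * E t := by
    have hng : n t * g t ≤ α₁ * (α₂ + Gbar) * Gbar := by
      have h1 : n t ≤ α₁ * (α₂ + Gbar) := le_trans (hnbound t ht) (by nlinarith [hGg t ht])
      nlinarith [hn0 t ht, hgpos t ht, hGg t ht, hg1 t ht]
    have h2 : n t * g t / lam ≤ α₁ * (α₂ + Gbar) * Gbar / lam := by
      gcongr
    exact mul_le_mul_of_nonneg_right h2 (hEpos t).le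
  have term2 : (ω / 2) * (∫ τ in t₀..t, n τ * E τ) ≤
      α₁ * (α₂ + Gbar) * Gbar / lam * (1 - E t) := by
    calc (ω / 2) * (∫ τ in t₀..t, n τ * E τ)
        ≤ (ω / 2) * (α₁ * (α₂ + Gbar) * (Gbar / c * (1 - E t))) :=
          mul_le_mul_of_nonneg_left boundB' (by positivity)
      _ = α₁ * (α₂ + Gbar) * Gbar / lam * (1 - E t) := by
          rw [hc_def]; field_simp
  show n t * g t / lam * E t + (ω / 2) * (∫ τ in t₀..t, n τ * E τ) ≤
      α₁ / lam * (α₂ + Gbar) * Gbar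
  have hfin : α₁ * (α₂ + Gbar) * Gbar / lam * E t +
      α₁ * (α₂ + Gbar) * Gbar / lam * (1 - E t) = α₁ / lam * (α₂ + Gbar) * Gbar := by ring
  linarith
end

section
/- Let a' ≥ 0, ε̄ := inf ε ≥ 0 with a' + ε̄/2 > 0, μ > 0, C̄ > 0, θ > 0, A ≥ 0, τ > 0, and define γ₁(σ) := (1 + θ + ε̄/2)/(a' + ε̄) + γ₃₂ σ^{2τ} with γ₃₂ := A²(1/μ + θ/C̄)/(a' + ε̄). Then for any γ ≥ γ₁(σ) and any a, d with 0 ≤ a ≤ A d^τ and 0 ≤ d ≤ σ: ε̄γ + (a + a')(1+γ) − θ − a²(1/μ + θ/C̄) ≥ 1 + a' + ε̄/2 > 1. -/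
/-- The key algebraic inequality guaranteeing positivity of the coefficient of u_t². -/
theorem coefficient_positivity (a' εbar μ Cbar θ A τ γ32 σ γ a d : ℝ)
    (ha' : 0 ≤ a') (hεbar : 0 ≤ εbar) (hpos : 0 < a' + εbar / 2)
    (hμ : 0 < μ) (hC : 0 < Cbar) (hθ : 0 < θ) (hA : 0 ≤ A) (hτ : 0 < τ)
    (hγ32 : γ32 = A ^ 2 * (1 / μ + θ / Cbar) / (a' + εbar))
    (hγ : γ ≥ (1 + θ + εbar / 2) / (a' + εbar) + γ32 * σ ^ (2 * τ))
    (ha : 0 ≤ a) (had : a ≤ A * d ^ τ)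
    (hd : 0 ≤ d) (hdσ : d ≤ σ) :
    εbar * γ + (a + a') * (1 + γ) - θ - a ^ 2 * (1 / μ + θ / Cbar) ≥
      1 + a' + εbar / 2 ∧ (1:ℝ) < 1 + a' + εbar / 2 := by
  have hs : 0 < a' + εbar := by linarith
  have hσ : 0 ≤ σ := le_trans hd hdσ
  have hdτ : d ^ τ ≤ σ ^ τ := Real.rpow_le_rpow hd hdσ hτ.le
  have hdτ0 : 0 ≤ d ^ τ := Real.rpow_nonneg hd τ
  have hσ2 : σ ^ (2 * τ) = (σ ^ τ) ^ 2 := by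
    rw [mul_comm, Real.rpow_mul hσ]
    norm_num
  have hterm : 0 ≤ 1 / μ + θ / Cbar := by positivity
  have hγ320 : 0 ≤ γ32 := by rw [hγ32]; positivity
  have hσ2τ : 0 ≤ σ ^ (2 * τ) := Real.rpow_nonneg hσ _
  have hfrac : 0 ≤ (1 + θ + εbar / 2) / (a' + εbar) := by positivity
  have hγ0 : 0 ≤ γ := by nlinarith [mul_nonneg hγ320 hσ2τ]
  have ha2 : a ^ 2 ≤ A ^ 2 * (σ ^ τ) ^ 2 := by nlinarith [mul_le_mul_of_nonneg_left hdτ hA]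
  have key : (a' + εbar) * γ ≥ 1 + θ + εbar / 2 + A ^ 2 * (1 / μ + θ / Cbar) * (σ ^ τ) ^ 2 := by
    rw [hγ32, hσ2] at hγ
    have h2 := mul_le_mul_of_nonneg_left hγ hs.le
    calc (a' + εbar) * γ ≥ (a' + εbar) * ((1 + θ + εbar / 2) / (a' + εbar)
        + A ^ 2 * (1 / μ + θ / Cbar) / (a' + εbar) * (σ ^ τ) ^ 2) := h2
      _ = 1 + θ + εbar / 2 + A ^ 2 * (1 / μ + θ / Cbar) * (σ ^ τ) ^ 2 := by
          field_simp
  refine ⟨?_, by linarith⟩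
  nlinarith [key, mul_nonneg ha hγ0, mul_nonneg hterm (sub_nonneg.2 ha2)]
end
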